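/- Let 0 < ρ < n₁/2. Every compactly supported element of |z|^{-ρ} I^{(0)}(ℝ^{n₁};0) lies in H^{-n₁/2-ε}(ℝ^{n₁}) for all ε > 0, where I^{(0)}(ℝ^{n₁};0) denotes the space of L² functions v satisfying iterated regularity under the vector fields z_i ∂_{z_j}: for all multi-indices with |α| = |γ|, z^α ∂_z^γ v ∈ L². -/

import Mathlib

open MeasureTheory Real
open scoped FourierTransform

noncomputable section

/-- Partial derivative in the `k`-th coordinate direction on `ℝ^{n}`. -/
def coordDeriv (n : ℕ) (k : Fin n) (f : EuclideanSpace ℝ (Fin n) → ℂ) :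
    EuclideanSpace ℝ (Fin n) → ℂ :=
  fun z => fderiv ℝ f z (EuclideanSpace.single k 1)

/-- Iterated partial derivative `∂_z^γ` for a multi-index `γ`. -/
def multiDeriv (n : ℕ) (γ : Fin n → ℕ) (f : EuclideanSpace ℝ (Fin n) → ℂ) :
    EuclideanSpace ℝ (Fin n) → ℂ :=
  (List.finRange n).foldr (fun k g => (coordDeriv n k)^[γ k] g) f

/-- The monomial `z^α` for a multi-index `α`. -/
def monomial (n : ℕ) (α : Fin n → ℕ) (z : EuclideanSpace ℝ (Fin n)) : ℝ :=
  ∏ i, (z i) ^ (α i)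

/-- `v ∈ I^{(0)}(ℝ^{n};0)`: iterated regularity in `L²` under the vector fields `zᵢ ∂_{z_j}`,
expressed in the multi-index form `z^α ∂_z^γ v ∈ L²` whenever `|α| = |γ|`. -/
def MemI0 (n : ℕ) (v : EuclideanSpace ℝ (Fin n) → ℂ) : Prop :=
  ∀ α γ : Fin n → ℕ, (∑ i, α i) = (∑ i, γ i) →
    MemLp (fun z => (monomial n α z : ℂ) * multiDeriv n γ v z)
      2 (volume : Measure (EuclideanSpace ℝ (Fin n)))

/-- Membership of `u` in the Sobolev space `H^s(ℝ^{n})`, via the Fourier transform. -/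
def MemSobolev (n : ℕ) (s : ℝ) (u : EuclideanSpace ℝ (Fin n) → ℂ) : Prop :=
  MemLp (fun ξ : EuclideanSpace ℝ (Fin n) =>
      ((1 + ‖ξ‖ ^ 2) ^ (s / 2) : ℝ) • 𝓕 u ξ)
    2 (volume : Measure (EuclideanSpace ℝ (Fin n)))

/-! ### Auxiliary lemmas -/

lemma pow_rpow_comm' {x : ℝ} (hx : 0 ≤ x) (c : ℝ) : ∀ j : ℕ, (x ^ j) ^ c = (x ^ c) ^ j := by
  intro j
  induction j with
  | zero => simp
  | succ m ih =>
    rw [pow_succ, Real.mul_rpow (pow_nonneg hx m) hx, ih, pow_succ]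

lemma integrableOn_rpow_neg_norm_closedBall (n : ℕ) (hn : 0 < n) {s : ℝ} (hs0 : 0 ≤ s)
    (hsn : s < n) {R : ℝ} (hR : 0 < R) :
    IntegrableOn (fun z : EuclideanSpace ℝ (Fin n) => ‖z‖ ^ (-s))
      (Metric.closedBall 0 R) volume := by
  constructor
  · exact Measurable.aestronglyMeasurable (by fun_prop)
  · rw [hasFiniteIntegral_iff_norm]
    set E := EuclideanSpace ℝ (Fin n)
    set g : E → ENNReal := fun z => ENNReal.ofReal (‖z‖ ^ (-s)) with hg
    have hnorm : ∀ z : E, ENNReal.ofReal ‖‖z‖ ^ (-s)‖ = g z := by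
      intro z
      rw [Real.norm_of_nonneg (Real.rpow_nonneg (norm_nonneg z) _)]
    simp only [hnorm]
    set S : ℕ → Set E := fun j =>
      {z | R / 2 ^ (j + 1) < ‖z‖} ∩ Metric.closedBall 0 (R / 2 ^ j) with hS
    have hsub : Metric.closedBall (0 : E) R ⊆ {0} ∪ ⋃ j, S j := by
      intro z hz
      rcases eq_or_ne z 0 with h0 | h0
      · exact Or.inl h0
      · right
        have hz0 : 0 < ‖z‖ := norm_pos_iff.2 h0
        have hzR : ‖z‖ ≤ R := by simpa [mem_closedBall_zero_iff] using hz
        have hex : ∃ k : ℕ, R / 2 ^ (k + 1) < ‖z‖ := by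
          obtain ⟨k, hk⟩ := pow_unbounded_of_one_lt (R / ‖z‖) (one_lt_two (α := ℝ))
          refine ⟨k, ?_⟩
          rw [div_lt_iff₀ (by positivity)]
          rw [div_lt_iff₀ hz0] at hk
          calc R < ‖z‖ * 2 ^ k := by linarith [hk]
            _ ≤ ‖z‖ * 2 ^ (k + 1) := by
                have : (2:ℝ) ^ k ≤ 2 ^ (k+1) := by
                  apply pow_le_pow_right₀ (by norm_num) (Nat.le_succ k)
                nlinarith
        refine Set.mem_iUnion.2 ⟨Nat.find hex, ⟨Nat.find_spec hex, ?_⟩⟩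
        rw [mem_closedBall_zero_iff]
        rcases Nat.eq_zero_or_pos (Nat.find hex) with hj | hj
        · rw [hj]; simpa using hzR
        · obtain ⟨m, hm⟩ := Nat.exists_eq_add_of_lt hj
          have := Nat.find_min hex (m := m) (by omega)
          push_neg at this
          have : ‖z‖ ≤ R / 2 ^ (m + 1) := this
          rw [hm] at *
          simpa [Nat.zero_add] using this
    set B := volume (Metric.ball (0 : E) 1) with hB
    have hBfin : B < ⊤ := measure_ball_lt_top
    have hfr : (Module.finrank ℝ E : ℝ) = n := by
      rw [finrank_euclideanSpace_fin]
    set c : ℝ := n - s with hc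
    have hcpos : 0 < c := by simp [hc]; linarith
    set q : ℝ := (2 : ℝ)⁻¹ ^ c with hq
    have hq0 : 0 ≤ q := Real.rpow_nonneg (by norm_num) _
    have hq1 : q < 1 := Real.rpow_lt_one (by norm_num) (by norm_num) hcpos
    set K : ℝ := 2 ^ n * (R / 2) ^ c with hK
    have hK0 : 0 ≤ K := mul_nonneg (by positivity) (Real.rpow_nonneg (by positivity) _)
    clear_value q
    have key : ∀ j : ℕ, (∫⁻ z in S j, g z) ≤ ENNReal.ofReal K * (ENNReal.ofReal q) ^ j * B := by
      intro j
      set b : ℝ := R / 2 ^ (j + 1) with hb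
      have hb0 : 0 < b := by positivity
      clear_value b
      have hmeas : MeasurableSet (S j) :=
        ((isOpen_lt continuous_const continuous_norm).measurableSet).inter
          measurableSet_closedBall
      have step1 : (∫⁻ z in S j, g z) ≤ ENNReal.ofReal (b ^ (-s)) * volume (S j) := by
        rw [← setLIntegral_const]
        refine setLIntegral_mono_ae (by fun_prop) ?_
        filter_upwards with z hz
        exact ENNReal.ofReal_le_ofReal
          (Real.rpow_le_rpow_of_nonpos hb0 (le_of_lt (by rw [hb]; exact hz.1))
            (neg_nonpos.2 hs0))
      have step2 : volume (S j) ≤ ENNReal.ofReal ((2 * b) ^ n) * B := by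
        have h2b : R / 2 ^ j = 2 * b := by
          rw [hb, pow_succ, ← div_div, mul_comm, div_mul_cancel₀ _ (two_ne_zero (α := ℝ))]
        calc volume (S j) ≤ volume (Metric.closedBall (0:E) (R / 2 ^ j)) :=
              measure_mono Set.inter_subset_right
          _ = ENNReal.ofReal ((R / 2 ^ j) ^ Module.finrank ℝ E) * B :=
              Measure.addHaar_closedBall _ _ (by positivity)
          _ = ENNReal.ofReal ((2 * b) ^ n) * B := by
              rw [h2b, finrank_euclideanSpace_fin]
      have hab : b ^ (-s) * (2 * b) ^ n = K * q ^ j := by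
        have hbn : b ^ (-s) * b ^ (n : ℕ) = b ^ c := by
          rw [← Real.rpow_natCast b n, ← Real.rpow_add hb0]
          congr 1
          simp [hc]; ring
        have hbsplit : b = (R / 2) * (2⁻¹) ^ j := by
          rw [hb, inv_pow, pow_succ, ← div_div, div_right_comm, div_eq_mul_inv]
        have hbc : b ^ c = (R / 2) ^ c * q ^ j := by
          rw [hbsplit, Real.mul_rpow (by positivity) (by positivity),
            pow_rpow_comm' (by norm_num) c j, hq]
        calc b ^ (-s) * (2 * b) ^ n = 2 ^ n * (b ^ (-s) * b ^ n) := by ring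
          _ = 2 ^ n * b ^ c := by rw [hbn]
          _ = 2 ^ n * ((R / 2) ^ c * q ^ j) := by rw [hbc]
          _ = K * q ^ j := by rw [hK]; ring
      calc (∫⁻ z in S j, g z) ≤ ENNReal.ofReal (b ^ (-s)) * (ENNReal.ofReal ((2*b) ^ n) * B) := by
            refine step1.trans ?_
            exact mul_le_mul_right step2 _
        _ = ENNReal.ofReal (b ^ (-s) * (2*b) ^ n) * B := by
            rw [ENNReal.ofReal_mul (Real.rpow_nonneg hb0.le _), mul_assoc]
        _ = ENNReal.ofReal (K * q ^ j) * B := by rw [hab]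
        _ = ENNReal.ofReal K * (ENNReal.ofReal q) ^ j * B := by
            rw [ENNReal.ofReal_mul hK0, ENNReal.ofReal_pow hq0]
    have hzero : (∫⁻ z in {(0 : E)}, g z) = 0 := by
      have h0 : volume ({(0 : E)} : Set E) = 0 := by
        rw [← Metric.closedBall_zero]
        rw [Measure.addHaar_closedBall _ _ le_rfl, finrank_euclideanSpace_fin,
          zero_pow hn.ne', ENNReal.ofReal_zero, zero_mul]
      rw [setLIntegral_measure_zero _ _ h0]
    calc (∫⁻ z in Metric.closedBall (0:E) R, g z)
        ≤ ∫⁻ z in ({0} ∪ ⋃ j, S j : Set E), g z := lintegral_mono_set hsub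
      _ ≤ (∫⁻ z in {(0:E)}, g z) + ∫⁻ z in (⋃ j, S j), g z := lintegral_union_le _ _ _
      _ = ∫⁻ z in (⋃ j, S j), g z := by rw [hzero, zero_add]
      _ ≤ ∑' j, ∫⁻ z in S j, g z := lintegral_iUnion_le _ _
      _ ≤ ∑' j, ENNReal.ofReal K * (ENNReal.ofReal q) ^ j * B := ENNReal.tsum_le_tsum key
      _ = (ENNReal.ofReal K * B) * ∑' j, (ENNReal.ofReal q) ^ j := by
          rw [← ENNReal.tsum_mul_left]
          congr 1; ext j; ring
      _ < ⊤ := by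
          rw [ENNReal.tsum_geometric]
          refine ENNReal.mul_lt_top (ENNReal.mul_lt_top ENNReal.ofReal_lt_top hBfin) ?_
          rw [ENNReal.inv_lt_top, tsub_pos_iff_lt]
          exact ENNReal.ofReal_lt_one.2 hq1

lemma multiDeriv_zero (n : ℕ) (f : EuclideanSpace ℝ (Fin n) → ℂ) :
    multiDeriv n (fun _ => 0) f = f := by
  unfold multiDeriv
  induction (List.finRange n) with
  | nil => rfl
  | cons a l ih => simpa using ih

lemma sq_rpow_aux {x : ℝ} (hx : 0 ≤ x) {t : ℝ} (ht : t ≠ 0) : (x ^ t) ^ 2 = x ^ (2 * t) := by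
  rcases eq_or_lt_of_le hx with h | h
  · rw [← h, Real.zero_rpow ht, Real.zero_rpow (by simpa using ht)]
    norm_num
  · rw [sq, ← Real.rpow_add h]
    congr 1; ring

/-- Let `0 < ρ < n₁/2`.  Every compactly supported element
`u = |z|^{-ρ} v` with `v ∈ I^{(0)}(ℝ^{n₁};0)` lies in `H^{-n₁/2-ε}(ℝ^{n₁})`
for all `ε > 0`. -/
theorem weighted_conormal_mem_sobolev
    (n₁ : ℕ) (hn : 0 < n₁) (ρ : ℝ) (hρ₀ : 0 < ρ) (hρ : ρ < (n₁ : ℝ) / 2)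
    (v : EuclideanSpace ℝ (Fin n₁) → ℂ) (hv : MemI0 n₁ v)
    (u : EuclideanSpace ℝ (Fin n₁) → ℂ)
    (hu : ∀ z, u z = (‖z‖ ^ (-ρ) : ℝ) • v z)
    (hsupp : HasCompactSupport u) :
    ∀ ε : ℝ, 0 < ε → MemSobolev n₁ (-(n₁ : ℝ) / 2 - ε) u := by
  intro ε hε
  -- v is in L²
  have hv2 : MemLp v 2 (volume : Measure (EuclideanSpace ℝ (Fin n₁))) := by
    have := hv (fun _ => 0) (fun _ => 0) rfl
    simpa [monomial, multiDeriv_zero] using this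
  -- choose a ball containing the support of u
  obtain ⟨R, hR0, hRsub⟩ : ∃ R : ℝ, 0 < R ∧ tsupport u ⊆ Metric.closedBall 0 R := by
    obtain ⟨R, hRsub⟩ := (hsupp.isBounded).subset_closedBall 0
    exact ⟨max R 1, lt_of_lt_of_le one_pos (le_max_right _ _),
      hRsub.trans (Metric.closedBall_subset_closedBall (le_max_left _ _))⟩
  -- the truncated weight is in L²
  set w : EuclideanSpace ℝ (Fin n₁) → ℝ :=
    (Metric.closedBall 0 R).indicator (fun z => ‖z‖ ^ (-ρ)) with hw
  have hw2 : MemLp w 2 (volume : Measure (EuclideanSpace ℝ (Fin n₁))) := by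
    rw [hw, memLp_indicator_iff_restrict measurableSet_closedBall]
    rw [memLp_two_iff_integrable_sq (Measurable.aestronglyMeasurable (by fun_prop))]
    have hint : IntegrableOn (fun z : EuclideanSpace ℝ (Fin n₁) => ‖z‖ ^ (-(2 * ρ)))
        (Metric.closedBall 0 R) volume :=
      integrableOn_rpow_neg_norm_closedBall n₁ hn (by linarith) (by push_cast; linarith) hR0
    refine hint.congr_fun (fun z _ => ?_) measurableSet_closedBall
    rw [sq_rpow_aux (norm_nonneg z) (neg_ne_zero.2 hρ₀.ne')]
    congr 1
    ring
  -- u = w • v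
  have huw : u = fun z => w z • v z := by
    funext z
    by_cases hz : z ∈ Metric.closedBall (0 : EuclideanSpace ℝ (Fin n₁)) R
    · rw [hu z, hw, Set.indicator_of_mem hz]
    · have hz' : z ∉ tsupport u := fun h => hz (hRsub h)
      rw [image_eq_zero_of_notMem_tsupport hz', hw, Set.indicator_of_notMem hz, zero_smul]
  -- u is integrable
  have hu1 : Integrable u (volume : Measure (EuclideanSpace ℝ (Fin n₁))) := by
    rw [← memLp_one_iff_integrable, huw]
    have h : MemLp (w • v) 1 (volume : Measure (EuclideanSpace ℝ (Fin n₁))) :=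
      hv2.smul hw2 (hpqr := ⟨by
        rw [inv_one, ENNReal.inv_two_add_inv_two]⟩)
    simpa [Pi.smul_apply', Pi.smul_def'] using h
  set s : ℝ := -(n₁ : ℝ) / 2 - ε with hs
  have hsneg : s < 0 := by
    have : (0:ℝ) ≤ (n₁ : ℝ) := Nat.cast_nonneg n₁
    rw [hs]; linarith
  have hFbound : ∀ ξ : EuclideanSpace ℝ (Fin n₁), ‖𝓕 u ξ‖ ≤ ∫ z, ‖u z‖ :=
    fun ξ => VectorFourier.norm_fourierIntegral_le_integral_norm _ _ _ _ _
  have hFcont : Continuous (𝓕 u) :=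
    VectorFourier.fourierIntegral_continuous Real.continuous_fourierChar
      (by exact continuous_inner) hu1
  -- the weight is in L²
  have hwt2 : MemLp (fun ξ : EuclideanSpace ℝ (Fin n₁) => ((1 + ‖ξ‖ ^ 2) ^ (s / 2) : ℝ)) 2
      (volume : Measure (EuclideanSpace ℝ (Fin n₁))) := by
    rw [memLp_two_iff_integrable_sq (Measurable.aestronglyMeasurable (by fun_prop))]
    have hint : Integrable
        (fun ξ : EuclideanSpace ℝ (Fin n₁) => ((1:ℝ) + ‖ξ‖ ^ 2) ^ (-((n₁ : ℝ) + 2 * ε) / 2))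
        (volume : Measure (EuclideanSpace ℝ (Fin n₁))) :=
      integrable_rpow_neg_one_add_norm_sq (by rw [finrank_euclideanSpace_fin]; linarith)
    refine hint.congr (Filter.Eventually.of_forall fun ξ => ?_)
    have hb : (0:ℝ) < 1 + ‖ξ‖ ^ 2 := by positivity
    have hhalf : s / 2 ≠ 0 := div_ne_zero hsneg.ne two_ne_zero
    dsimp only
    rw [sq_rpow_aux hb.le hhalf]
    congr 1
    rw [hs]; ring
  -- conclude
  show MemLp (fun ξ : EuclideanSpace ℝ (Fin n₁) =>
      ((1 + ‖ξ‖ ^ 2) ^ (s / 2) : ℝ) • 𝓕 u ξ) 2 volume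
  refine MemLp.of_le_mul (c := ∫ z, ‖u z‖) hwt2 ?_ (Filter.Eventually.of_forall fun ξ => ?_)
  · refine Continuous.aestronglyMeasurable ?_
    refine Continuous.smul (f := fun ξ : EuclideanSpace ℝ (Fin n₁) => ((1 + ‖ξ‖ ^ 2) ^ (s / 2) : ℝ)) ?_ hFcont
    exact (continuous_const.add (continuous_norm.pow 2)).rpow_const
      (fun ξ => Or.inl (ne_of_gt (by positivity : (0:ℝ) < 1 + ‖ξ‖ ^ 2)))
  · rw [norm_smul]
    have h1 : (0:ℝ) ≤ (1 + ‖ξ‖ ^ 2) ^ (s / 2) := Real.rpow_nonneg (by positivity) _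
    rw [Real.norm_of_nonneg h1]
    calc (1 + ‖ξ‖ ^ 2) ^ (s / 2) * ‖𝓕 u ξ‖
        ≤ (1 + ‖ξ‖ ^ 2) ^ (s / 2) * ∫ z, ‖u z‖ := mul_le_mul_of_nonneg_left (hFbound ξ) h1
      _ = (∫ z, ‖u z‖) * (1 + ‖ξ‖ ^ 2) ^ (s / 2) := mul_comm _ _
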